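/- arXiv:2004.09865 — 5 statements merged into one kernel-verified Lean document; each statement's English description precedes it below -/
import Mathlib

section
/- (Proposition 1) Given a linear copositive problem with constraint matrix function A(x) = Σ_{i=1}^n x_i A_i + A_0, the Slater condition (there exists x̄ ∈ ℝⁿ such that tᵀA(x̄)t > 0 for all t ∈ T) holds if and only if the normalized immobile index set T_im is empty. -/
open Matrix

/-- The constraint matrix function `𝓐(x) = A₀ + ∑ i xᵢ Aᵢ`. -/
def Amap (p n : ℕ) (A₀ : Matrix (Fin p) (Fin p) ℝ)
    (A : Fin n → Matrix (Fin p) (Fin p) ℝ) (x : Fin n → ℝ) :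
    Matrix (Fin p) (Fin p) ℝ :=
  A₀ + ∑ i, x i • A i

/-- The feasible set `X = {x : tᵀ𝓐(x)t ≥ 0 ∀ t ∈ ℝ₊ᵖ}`. -/
def feasSet (p n : ℕ) (A₀ : Matrix (Fin p) (Fin p) ℝ)
    (A : Fin n → Matrix (Fin p) (Fin p) ℝ) : Set (Fin n → ℝ) :=
  {x | ∀ t : Fin p → ℝ, (∀ k, 0 ≤ t k) → 0 ≤ t ⬝ᵥ (Amap p n A₀ A x *ᵥ t)}

/-- The normalized immobile index set `T_im = {t ∈ T : tᵀ𝓐(x)t = 0 ∀ x ∈ X}`. -/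
def normImmobile (p n : ℕ) (A₀ : Matrix (Fin p) (Fin p) ℝ)
    (A : Fin n → Matrix (Fin p) (Fin p) ℝ) : Set (Fin p → ℝ) :=
  {t | (∀ k, 0 ≤ t k) ∧ (∑ k, t k) = 1 ∧
    ∀ x ∈ feasSet p n A₀ A, t ⬝ᵥ (Amap p n A₀ A x *ᵥ t) = 0}

/-- The immobile index set `R_im = {t ∈ ℝ₊ᵖ : tᵀ𝓐(x)t = 0 ∀ x ∈ X}`. -/
def immobile (p n : ℕ) (A₀ : Matrix (Fin p) (Fin p) ℝ)
    (A : Fin n → Matrix (Fin p) (Fin p) ℝ) : Set (Fin p → ℝ) :=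
  {t | (∀ k, 0 ≤ t k) ∧ ∀ x ∈ feasSet p n A₀ A, t ⬝ᵥ (Amap p n A₀ A x *ᵥ t) = 0}

/-- The quadratic form is affine in `x`. -/
lemma quad_affine (p n : ℕ) (A₀ : Matrix (Fin p) (Fin p) ℝ)
    (A : Fin n → Matrix (Fin p) (Fin p) ℝ) (x : Fin n → ℝ) (t : Fin p → ℝ) :
    t ⬝ᵥ (Amap p n A₀ A x *ᵥ t)
      = t ⬝ᵥ (A₀ *ᵥ t) + ∑ i, x i * (t ⬝ᵥ (A i *ᵥ t)) := by
  have hsum : ∀ (s : Finset (Fin n)),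
      t ⬝ᵥ ((∑ i ∈ s, x i • A i) *ᵥ t) = ∑ i ∈ s, x i * (t ⬝ᵥ (A i *ᵥ t)) := by
    intro s
    induction s using Finset.induction_on with
    | empty => simp [Matrix.zero_mulVec]
    | insert _ _ h ih =>
        rw [Finset.sum_insert h, Matrix.add_mulVec, dotProduct_add,
          Matrix.smul_mulVec, dotProduct_smul, Finset.sum_insert h, ih]
        simp [smul_eq_mul]
  rw [Amap, Matrix.add_mulVec, dotProduct_add, hsum]

/-- Scaling the vector scales the quadratic form quadratically. -/
lemma quad_smul (p : ℕ) (M : Matrix (Fin p) (Fin p) ℝ) (c : ℝ) (t : Fin p → ℝ) :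
    (c • t) ⬝ᵥ (M *ᵥ (c • t)) = c * c * (t ⬝ᵥ (M *ᵥ t)) := by
  rw [Matrix.mulVec_smul, smul_dotProduct, dotProduct_smul]
  ring_nf

/-- Continuity of the quadratic form in `t`. -/
lemma quad_continuous (p : ℕ) (M : Matrix (Fin p) (Fin p) ℝ) :
    Continuous fun t : Fin p → ℝ => t ⬝ᵥ (M *ᵥ t) := by
  simp only [dotProduct, Matrix.mulVec]
  fun_prop

/-- Proposition 1: the Slater condition (existence of `x̄` with
`tᵀ𝓐(x̄)t > 0` for all `t` in the simplex `T`) holds iff the normalized immobile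
index set `T_im` is empty. -/
theorem slater_iff_normImmobile_empty (p n : ℕ) (hp : 1 ≤ p) (hn : 1 ≤ n)
    (A₀ : Matrix (Fin p) (Fin p) ℝ) (A : Fin n → Matrix (Fin p) (Fin p) ℝ)
    (hA₀ : A₀.IsSymm) (hA : ∀ i, (A i).IsSymm) :
    (∃ x : Fin n → ℝ, ∀ t : Fin p → ℝ, (∀ k, 0 ≤ t k) → (∑ k, t k) = 1 →
        0 < t ⬝ᵥ (Amap p n A₀ A x *ᵥ t)) ↔
    normImmobile p n A₀ A = ∅ := by
  constructor
  · rintro ⟨x, hx⟩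
    -- x is feasible
    have hxfeas : x ∈ feasSet p n A₀ A := by
      intro t ht
      rcases eq_or_lt_of_le (Finset.sum_nonneg fun k _ => ht k) with h0 | h0
      · have : t = 0 := by
          funext k
          exact le_antisymm (by
            have := (Finset.sum_eq_zero_iff_of_nonneg (fun k _ => ht k)).mp h0.symm
            exact le_of_eq (this k (Finset.mem_univ k))) (ht k)
        simp [this]
      · set c : ℝ := (∑ k, t k)⁻¹ with hc
        have hcpos : 0 < c := inv_pos.mpr h0
        have hts : ∀ k, 0 ≤ (c • t) k := fun k => mul_nonneg hcpos.le (ht k)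
        have hsum1 : (∑ k, (c • t) k) = 1 := by
          simp only [Pi.smul_apply, smul_eq_mul, ← Finset.mul_sum]
          exact inv_mul_cancel₀ (ne_of_gt h0)
        have := hx (c • t) hts hsum1
        rw [quad_smul] at this
        nlinarith
    by_contra hne
    rcases Set.eq_empty_or_nonempty (normImmobile p n A₀ A) with h | ⟨t, ht⟩
    · exact hne h
    · obtain ⟨ht0, ht1, ht2⟩ := ht
      have := hx t ht0 ht1
      rw [ht2 x hxfeas] at this
      exact lt_irrefl 0 this
  · intro hempty
    -- For each t in the simplex, some feasible x gives a positive value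
    set X := feasSet p n A₀ A with hX
    have key : ∀ t ∈ stdSimplex ℝ (Fin p), ∃ x ∈ X,
        0 < t ⬝ᵥ (Amap p n A₀ A x *ᵥ t) := by
      rintro t ⟨ht0, ht1⟩
      by_contra hcon
      push_neg at hcon
      have : t ∈ normImmobile p n A₀ A := by
        refine ⟨ht0, ht1, fun x hx => ?_⟩
        exact le_antisymm (hcon x hx) (hx t ht0)
      rw [hempty] at this
      exact this
    -- Open cover of the simplex
    let U : X → Set (Fin p → ℝ) :=
      fun x => {t | 0 < t ⬝ᵥ (Amap p n A₀ A x.1 *ᵥ t)}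
    have hUopen : ∀ x : X, IsOpen (U x) := fun x =>
      isOpen_lt continuous_const (quad_continuous p _)
    have hcover : stdSimplex ℝ (Fin p) ⊆ ⋃ x : X, U x := by
      intro t ht
      obtain ⟨x, hx, hpos⟩ := key t ht
      exact Set.mem_iUnion.mpr ⟨⟨x, hx⟩, hpos⟩
    obtain ⟨s, hs⟩ := (isCompact_stdSimplex ℝ (Fin p)).elim_finite_subcover U hUopen hcover
    -- simplex is nonempty, so s is nonempty
    have hTne : (stdSimplex ℝ (Fin p)).Nonempty := by
      refine ⟨fun _ => (p : ℝ)⁻¹, fun k => by positivity, ?_⟩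
      simp
      field_simp
    obtain ⟨t₀, ht₀⟩ := hTne
    have hsne : s.Nonempty := by
      obtain ⟨x, hxs, -⟩ := Set.mem_iUnion₂.mp (hs ht₀)
      exact ⟨x, hxs⟩
    have hcardpos : (0 : ℝ) < (s.card : ℝ) := by
      exact_mod_cast Finset.card_pos.mpr hsne
    set c : ℝ := (s.card : ℝ)⁻¹ with hcdef
    have hcpos : 0 < c := inv_pos.mpr hcardpos
    -- average of the finitely many feasible points
    refine ⟨c • ∑ j ∈ s, (j : Fin n → ℝ), ?_⟩
    intro t ht0 ht1
    -- the quadratic form at the average is the average of the quadratic forms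
    have havg : t ⬝ᵥ (Amap p n A₀ A (c • ∑ j ∈ s, (j : Fin n → ℝ)) *ᵥ t)
        = c * ∑ j ∈ s, t ⬝ᵥ (Amap p n A₀ A (j : Fin n → ℝ) *ᵥ t) := by
      rw [quad_affine]
      have : ∀ j : X, t ⬝ᵥ (Amap p n A₀ A (j : Fin n → ℝ) *ᵥ t)
          = t ⬝ᵥ (A₀ *ᵥ t) + ∑ i, (j : Fin n → ℝ) i * (t ⬝ᵥ (A i *ᵥ t)) :=
        fun j => quad_affine p n A₀ A _ t
      simp only [this, mul_add, Finset.sum_add_distrib, Finset.mul_sum]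
      rw [Finset.sum_const, nsmul_eq_mul]
      have hc1 : (s.card : ℝ) * c = 1 := mul_inv_cancel₀ (ne_of_gt hcardpos)
      rw [← mul_assoc, hc1, one_mul]
      congr 1
      rw [Finset.sum_comm]
      refine Finset.sum_congr rfl fun i _ => ?_
      simp only [Pi.smul_apply, Finset.sum_apply, smul_eq_mul]
      rw [mul_comm c, Finset.sum_mul, Finset.sum_mul]
      exact Finset.sum_congr rfl fun j _ => by ring
    rw [havg]
    apply mul_pos hcpos
    -- each term is nonneg, and the one covering t is positive
    obtain ⟨j₀, hj₀s, hj₀⟩ := Set.mem_iUnion₂.mp (hs ⟨ht0, ht1⟩)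
    refine Finset.sum_pos' (fun j hj => j.2 t ht0) ⟨j₀, hj₀s, hj₀⟩
end

section
/- (Proposition 2) For every normalized immobile index, the gradient-type inequalities hold along the whole feasible set: if τ ∈ T_im, then for every x ∈ X the vector A(x)τ has all components nonnegative, i.e., A(x)τ ≥ 0 componentwise. -/
open Matrix

lemma amap_symm (p n : ℕ) (A₀ : Matrix (Fin p) (Fin p) ℝ)
    (A : Fin n → Matrix (Fin p) (Fin p) ℝ)
    (hA₀ : A₀.IsSymm) (hA : ∀ i, (A i).IsSymm) (x : Fin n → ℝ) :
    (Amap p n A₀ A x).IsSymm := by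
  unfold Amap
  apply Matrix.IsSymm.add hA₀
  unfold Matrix.IsSymm
  rw [Matrix.transpose_sum]
  exact Finset.sum_congr rfl fun i _ => by
    rw [Matrix.transpose_smul, (hA i)]

/-- Proposition 2: if `τ ∈ T_im`, then for every feasible `x ∈ X`
the vector `𝓐(x)τ` is componentwise nonnegative. -/
theorem immobile_index_gradient_nonneg (p n : ℕ) (hp : 1 ≤ p) (hn : 1 ≤ n)
    (A₀ : Matrix (Fin p) (Fin p) ℝ) (A : Fin n → Matrix (Fin p) (Fin p) ℝ)
    (hA₀ : A₀.IsSymm) (hA : ∀ i, (A i).IsSymm)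
    (τ : Fin p → ℝ) (hτ : τ ∈ normImmobile p n A₀ A) :
    ∀ x ∈ feasSet p n A₀ A, ∀ k, 0 ≤ (Amap p n A₀ A x *ᵥ τ) k := by
  intro x hx k
  obtain ⟨hτ0, hτ1, hτim⟩ := hτ
  set M := Amap p n A₀ A x with hM
  have hMs : M.IsSymm := amap_symm p n A₀ A hA₀ hA x
  set a := (M *ᵥ τ) k with ha
  set c := M k k with hc
  -- key inequality: for all s ≥ 0, 0 ≤ 2*s*a + s^2*c
  have key : ∀ s : ℝ, 0 ≤ s → 0 ≤ 2 * s * a + s ^ 2 * c := by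
    intro s hs
    set e : Fin p → ℝ := Pi.single k 1 with he
    have ht : ∀ j, 0 ≤ (τ + s • e) j := by
      intro j
      rcases eq_or_ne j k with hj | hj
      · simp only [hj, he, Pi.add_apply, Pi.smul_apply, Pi.single_eq_same, smul_eq_mul,
          mul_one]
        exact add_nonneg (hτ0 k) hs
      · simp [he, Pi.single_eq_of_ne hj, hτ0 j]
    have h := hx (τ + s • e) ht
    have hzero := hτim x hx
    have hek : ∀ v : Fin p → ℝ, e ⬝ᵥ v = v k := by
      intro v
      simp [he, dotProduct, Pi.single_apply, Finset.sum_ite_eq]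
    have hsymm : τ ⬝ᵥ (M *ᵥ e) = (M *ᵥ τ) k := by
      rw [Matrix.dotProduct_mulVec, ← Matrix.mulVec_transpose, hMs.eq,
        dotProduct_comm, hek]
    have hkk : (M *ᵥ e) k = c := by
      simp [he, Matrix.mulVec, dotProduct, Pi.single_apply, Finset.sum_ite_eq, hc]
    have expand : (τ + s • e) ⬝ᵥ (M *ᵥ (τ + s • e))
        = 2 * s * a + s ^ 2 * c := by
      rw [Matrix.mulVec_add, Matrix.mulVec_smul, add_dotProduct,
        smul_dotProduct, dotProduct_add, dotProduct_add,
        dotProduct_smul, dotProduct_smul, hzero, hsymm, hek, hek, hkk]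
      simp only [smul_eq_mul, ← ha]
      ring
    rw [expand] at h
    exact h
  -- conclude a ≥ 0
  by_contra hlt
  push_neg at hlt
  rcases le_or_gt c 0 with hc0 | hc0
  · have := key 1 zero_le_one
    nlinarith
  · have hs : (0:ℝ) ≤ -a / c := div_nonneg (by linarith) hc0.le
    have h1 := key (-a / c) hs
    have hcne : c ≠ 0 := ne_of_gt hc0
    have h2 : 2 * (-a / c) * a + (-a / c) ^ 2 * c = -a ^ 2 / c := by
      field_simp
      ring
    rw [h2] at h1
    have h3 : 0 ≤ -a ^ 2 / c * c := mul_nonneg h1 hc0.le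
    have h4 : -a ^ 2 / c * c = -a ^ 2 := by field_simp
    nlinarith
end

section
/- (Lemma 2, Weak duality) Let x ∈ X be a feasible solution of the primal linear copositive problem min cᵀx s.t. A(x) ∈ COP^p, and let (U_m, W_m, D_m, m = 1,…,m₀; U) be a feasible solution of the extended dual problem, i.e., U ∈ CP^p, W_0 = 0 (the p×p zero matrix), the block matrices [[U_m, W_m],[W_mᵀ, D_m]] belong to CP^{2p} for m = 1,…,m₀, (U_m + W_{m−1})•A_j = 0 for j = 0,1,…,n and m = 1,…,m₀, and (U + W_{m₀})•A_j = c_j for j = 1,…,n (with W_{m₀} interpreted as 0 when m₀ = 0). Then cᵀx ≥ −(U + W_{m₀})•A_0. -/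
open Matrix

/-- The cone of completely positive matrices `CP = conv{vvᵀ : v ≥ 0}`. -/
def CPcone (ι : Type) [Fintype ι] : Set (Matrix ι ι ℝ) :=
  convexHull ℝ {M | ∃ v : ι → ℝ, (∀ k, 0 ≤ v k) ∧ M = Matrix.vecMulVec v v}

/- auxiliary lemmas -/

lemma trace_vecMulVec_mul {ι : Type} [Fintype ι] (v : ι → ℝ) (B : Matrix ι ι ℝ) :
    (Matrix.vecMulVec v v * B).trace = v ⬝ᵥ (B *ᵥ v) := by
  simp only [Matrix.trace, Matrix.diag, Matrix.mul_apply, Matrix.vecMulVec_apply,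
    dotProduct, Matrix.mulVec]
  rw [Finset.sum_comm]
  refine Finset.sum_congr rfl fun j _ => ?_
  rw [Finset.mul_sum]
  refine Finset.sum_congr rfl fun i _ => ?_
  ring

lemma my_trace_fromBlocks {ι : Type} [Fintype ι] (A B C D : Matrix ι ι ℝ) :
    (Matrix.fromBlocks A B C D).trace = A.trace + D.trace := by
  simp [Matrix.trace, Matrix.diag, Fintype.sum_sum_type, Matrix.fromBlocks]

lemma cp_trace_nonneg {ι : Type} [Fintype ι] (M B : Matrix ι ι ℝ)
    (hM : M ∈ convexHull ℝ {M : Matrix ι ι ℝ | ∃ v : ι → ℝ, (∀ k, 0 ≤ v k) ∧ M = Matrix.vecMulVec v v})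
    (hB : ∀ v : ι → ℝ, (∀ k, 0 ≤ v k) → 0 ≤ v ⬝ᵥ (B *ᵥ v)) :
    0 ≤ (M * B).trace := by
  have hsub : {M : Matrix ι ι ℝ | ∃ v : ι → ℝ, (∀ k, 0 ≤ v k) ∧ M = Matrix.vecMulVec v v}
      ⊆ {M : Matrix ι ι ℝ | 0 ≤ (M * B).trace} := by
    rintro _ ⟨v, hv, rfl⟩
    simpa [trace_vecMulVec_mul] using hB v hv
  have hconv : Convex ℝ {M : Matrix ι ι ℝ | 0 ≤ (M * B).trace} := by
    intro M₁ h₁ M₂ h₂ a b ha hb hab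
    simp only [Set.mem_setOf_eq] at *
    have : ((a • M₁ + b • M₂) * B).trace = a * (M₁ * B).trace + b * (M₂ * B).trace := by
      simp [Matrix.add_mul, Matrix.smul_mul, Matrix.trace_smul, smul_eq_mul]
    rw [this]
    have := mul_nonneg ha h₁
    have := mul_nonneg hb h₂
    linarith
  exact convexHull_min hsub hconv hM

lemma eps_extract (a b : ℝ) (h : ∀ ε : ℝ, 0 < ε → 0 ≤ 2 * ε * a + ε ^ 2 * b) : 0 ≤ a := by
  by_contra hcon
  push_neg at hcon
  rcases le_or_gt b 0 with hb | hb
  · have := h 1 one_pos; nlinarith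
  · have hε : 0 < -a / b := div_pos (by linarith) hb
    have := h _ hε
    have heq : 2 * (-a / b) * a + (-a / b) ^ 2 * b = -(a ^ 2) / b := by
      field_simp; ring
    rw [heq, neg_div] at this
    have ha2 : 0 < a ^ 2 := by nlinarith
    have := div_pos ha2 hb
    linarith

lemma Beps_copos {p : ℕ} (A : Matrix (Fin p) (Fin p) ℝ)
    (hA : ∀ t : Fin p → ℝ, (∀ k, 0 ≤ t k) → 0 ≤ t ⬝ᵥ (A *ᵥ t)) (ε : ℝ) (hε : 0 ≤ ε) :
    ∀ z : (Fin p ⊕ Fin p) → ℝ, (∀ k, 0 ≤ z k) →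
      0 ≤ z ⬝ᵥ (Matrix.fromBlocks A (ε • A) (ε • A) ((ε ^ 2) • A) *ᵥ z) := by
  intro z hz
  set u := z ∘ Sum.inl with hu
  set v := z ∘ Sum.inr with hv
  have hzelim : z = Sum.elim u v := (Sum.elim_comp_inl_inr z).symm
  rw [hzelim, Matrix.fromBlocks_mulVec, sumElim_dotProduct_sumElim]
  simp only [Sum.elim_comp_inl, Sum.elim_comp_inr]
  have key : u ⬝ᵥ (A *ᵥ u + (ε • A) *ᵥ v) + v ⬝ᵥ ((ε • A) *ᵥ u + (ε ^ 2 • A) *ᵥ v)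
      = (u + ε • v) ⬝ᵥ (A *ᵥ (u + ε • v)) := by
    simp only [Matrix.smul_mulVec, Matrix.mulVec_add, Matrix.mulVec_smul,
      dotProduct_add, add_dotProduct, dotProduct_smul, smul_dotProduct, smul_eq_mul]
    ring
  rw [key]
  refine hA _ fun k => ?_
  have h1 : 0 ≤ u k := hz (Sum.inl k)
  have h2 : 0 ≤ v k := hz (Sum.inr k)
  have : 0 ≤ ε * v k := mul_nonneg hε h2
  simpa [Pi.add_apply, Pi.smul_apply, smul_eq_mul] using add_nonneg h1 this

lemma trace_block_eps {p : ℕ} (U W D A : Matrix (Fin p) (Fin p) ℝ) (hA : A.IsSymm) (ε : ℝ) :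
    (Matrix.fromBlocks U W Wᵀ D * Matrix.fromBlocks A (ε • A) (ε • A) ((ε ^ 2) • A)).trace
      = (U * A).trace + 2 * ε * (W * A).trace + ε ^ 2 * (D * A).trace := by
  rw [Matrix.fromBlocks_multiply, my_trace_fromBlocks]
  have h1 : (Wᵀ * A).trace = (W * A).trace := by
    rw [← Matrix.trace_transpose (Wᵀ * A), Matrix.transpose_mul, Matrix.transpose_transpose,
      hA.eq, Matrix.trace_mul_comm]
  simp only [Matrix.mul_smul, Matrix.trace_add, Matrix.trace_smul, smul_eq_mul, h1]
  ring

lemma trace_mul_Amap (p n : ℕ) (A₀ : Matrix (Fin p) (Fin p) ℝ)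
    (A : Fin n → Matrix (Fin p) (Fin p) ℝ) (x : Fin n → ℝ) (X : Matrix (Fin p) (Fin p) ℝ) :
    (X * Amap p n A₀ A x).trace = (X * A₀).trace + ∑ j, x j * (X * A j).trace := by
  simp [Amap, Matrix.mul_add, Matrix.mul_sum, Matrix.mul_smul, Matrix.trace_add,
    Matrix.trace_sum, Matrix.trace_smul, smul_eq_mul]


/-- Lemma 2, weak duality: if `x ∈ X` is primal feasible and
`(U_m, W_m, D_m, m = 1,…,m₀; U)` is feasible for the extended dual problem
(with the convention `W_0 = 0`, so `W_{m₀} = 0` when `m₀ = 0`), then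
`cᵀx ≥ −(U + W_{m₀}) • A₀`. -/
theorem weak_duality (p n : ℕ) (hp : 1 ≤ p) (hn : 1 ≤ n) (m₀ : ℕ)
    (A₀ : Matrix (Fin p) (Fin p) ℝ) (A : Fin n → Matrix (Fin p) (Fin p) ℝ)
    (hA₀ : A₀.IsSymm) (hA : ∀ i, (A i).IsSymm) (c : Fin n → ℝ)
    (x : Fin n → ℝ) (hx : x ∈ feasSet p n A₀ A)
    (U : Matrix (Fin p) (Fin p) ℝ) (Um Wm Dm : ℕ → Matrix (Fin p) (Fin p) ℝ)
    (hU : U ∈ CPcone (Fin p)) (hW0 : Wm 0 = 0)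
    (hblocks : ∀ m, 1 ≤ m → m ≤ m₀ →
      Matrix.fromBlocks (Um m) (Wm m) (Wm m)ᵀ (Dm m) ∈ CPcone (Fin p ⊕ Fin p))
    (hzero : ∀ m, 1 ≤ m → m ≤ m₀ →
      ((Um m + Wm (m - 1)) * A₀).trace = 0 ∧
      ∀ j : Fin n, ((Um m + Wm (m - 1)) * A j).trace = 0)
    (hc : ∀ j : Fin n, ((U + Wm m₀) * A j).trace = c j) :
    -((U + Wm m₀) * A₀).trace ≤ ∑ j, c j * x j := by
  set tA := Amap p n A₀ A x with htA
  have hcop : ∀ t : Fin p → ℝ, (∀ k, 0 ≤ t k) → 0 ≤ t ⬝ᵥ (tA *ᵥ t) := hx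
  have hsymm : tA.IsSymm := by
    rw [htA]
    unfold Amap Matrix.IsSymm
    rw [Matrix.transpose_add, Matrix.transpose_sum]
    simp only [Matrix.transpose_smul]
    rw [hA₀.eq]
    congr 1
    exact Finset.sum_congr rfl fun i _ => by rw [(hA i).eq]
  -- for each feasible block, the inequality family in ε
  have hblockineq : ∀ m, 1 ≤ m → m ≤ m₀ → ∀ ε : ℝ, 0 ≤ ε →
      0 ≤ (Um m * tA).trace + 2 * ε * (Wm m * tA).trace + ε ^ 2 * (Dm m * tA).trace := by
    intro m h1 h2 ε hε
    have := cp_trace_nonneg _ (Matrix.fromBlocks tA (ε • tA) (ε • tA) ((ε ^ 2) • tA))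
      (hblocks m h1 h2) (Beps_copos tA hcop ε hε)
    rwa [trace_block_eps _ _ _ _ hsymm] at this
  -- zero trace against tA
  have hztA : ∀ m, 1 ≤ m → m ≤ m₀ → (Um m * tA).trace + (Wm (m - 1) * tA).trace = 0 := by
    intro m h1 h2
    obtain ⟨hz0, hzj⟩ := hzero m h1 h2
    have : ((Um m + Wm (m - 1)) * tA).trace = 0 := by
      rw [trace_mul_Amap, hz0]
      simp [hzj]
    rwa [Matrix.add_mul, Matrix.trace_add] at this
  -- induction: Wm m has nonnegative trace against tA
  have key : ∀ m, m ≤ m₀ → 0 ≤ (Wm m * tA).trace := by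
    intro m
    induction m with
    | zero => intro _; simp [hW0]
    | succ k ih =>
      intro hk
      have hk' : k ≤ m₀ := Nat.le_of_succ_le hk
      have hWk : 0 ≤ (Wm k * tA).trace := ih hk'
      have h1 : 1 ≤ k + 1 := Nat.succ_le_succ (Nat.zero_le k)
      have hz := hztA (k + 1) h1 hk
      simp only [Nat.add_sub_cancel] at hz
      have hU0 : 0 ≤ (Um (k + 1) * tA).trace := by
        have := hblockineq (k + 1) h1 hk 0 le_rfl
        simpa using this
      have hUz : (Um (k + 1) * tA).trace = 0 := by linarith
      refine eps_extract _ ((Dm (k + 1) * tA).trace) fun ε hε => ?_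
      have := hblockineq (k + 1) h1 hk ε (le_of_lt hε)
      rw [hUz] at this
      linarith
  have hUtA : 0 ≤ (U * tA).trace := by
    have : ∀ v : Fin p → ℝ, (∀ k, 0 ≤ v k) → 0 ≤ v ⬝ᵥ (tA *ᵥ v) := hcop
    exact cp_trace_nonneg U tA hU hcop
  have hWtA : 0 ≤ (Wm m₀ * tA).trace := key m₀ le_rfl
  have hsum : ((U + Wm m₀) * tA).trace
      = ((U + Wm m₀) * A₀).trace + ∑ j, x j * ((U + Wm m₀) * A j).trace :=
    trace_mul_Amap p n A₀ A x _
  have hnonneg : 0 ≤ ((U + Wm m₀) * tA).trace := by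
    rw [Matrix.add_mul, Matrix.trace_add]; linarith
  have hcs : ∑ j, c j * x j = ∑ j, x j * ((U + Wm m₀) * A j).trace := by
    refine Finset.sum_congr rfl fun j _ => ?_
    rw [hc j]; ring
  rw [hcs]
  linarith [hsum ▸ hnonneg]
end

section
/- (Modified index remains immobile in Procedure DAM) Let τ_s, τ_i ∈ T_im and θ ∈ (0,1), and suppose τ̄ = (τ_s − θ τ_i)/(1 − θ) has all components nonnegative. Then eᵀτ̄ = 1 and τ̄ ∈ T_im, i.e., τ̄ᵀA(x)τ̄ = 0 for all x ∈ X. -/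
open Matrix

lemma quad_expand {p : ℕ} (M : Matrix (Fin p) (Fin p) ℝ) (a b : Fin p → ℝ) (r s : ℝ) :
    (r • a + s • b) ⬝ᵥ (M *ᵥ (r • a + s • b)) =
      r^2 * (a ⬝ᵥ (M *ᵥ a)) + r*s * (a ⬝ᵥ (M *ᵥ b)) + r*s * (b ⬝ᵥ (M *ᵥ a))
        + s^2 * (b ⬝ᵥ (M *ᵥ b)) := by
  simp [mulVec_add, mulVec_smul, dotProduct_add, add_dotProduct, dotProduct_smul,
    smul_dotProduct, smul_eq_mul]
  ring

/-- modified index remains immobile in Procedure DAM: if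
`τ_s, τ_i ∈ T_im`, `θ ∈ (0,1)` and `τ̄ = (τ_s − θ τ_i)/(1 − θ)` is componentwise
nonnegative, then `eᵀτ̄ = 1` and `τ̄ ∈ T_im` (i.e. `τ̄ᵀ𝓐(x)τ̄ = 0` for all `x ∈ X`). -/
theorem dam_modified_index_immobile (p n : ℕ) (hp : 1 ≤ p) (hn : 1 ≤ n)
    (A₀ : Matrix (Fin p) (Fin p) ℝ) (A : Fin n → Matrix (Fin p) (Fin p) ℝ)
    (hA₀ : A₀.IsSymm) (hA : ∀ i, (A i).IsSymm)
    (τs τi : Fin p → ℝ)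
    (hτs : τs ∈ normImmobile p n A₀ A) (hτi : τi ∈ normImmobile p n A₀ A)
    (θ : ℝ) (hθ : θ ∈ Set.Ioo (0 : ℝ) 1)
    (hnn : ∀ k, 0 ≤ ((1 - θ)⁻¹ • (τs - θ • τi)) k) :
    (∑ k, ((1 - θ)⁻¹ • (τs - θ • τi)) k) = 1 ∧
      ((1 - θ)⁻¹ • (τs - θ • τi)) ∈ normImmobile p n A₀ A := by
  obtain ⟨hθ1, hθ2⟩ := hθ
  have h1θ : (0:ℝ) < 1 - θ := by linarith
  obtain ⟨hτs_nn, hτs_sum, hτs_im⟩ := hτs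
  obtain ⟨hτi_nn, hτi_sum, hτi_im⟩ := hτi
  set tb : Fin p → ℝ := (1 - θ)⁻¹ • (τs - θ • τi) with htb
  have hsum : (∑ k, tb k) = 1 := by
    have : (∑ k, tb k) = (1 - θ)⁻¹ * ((∑ k, τs k) - θ * (∑ k, τi k)) := by
      simp only [htb, Pi.smul_apply, Pi.sub_apply, smul_eq_mul]
      rw [← Finset.mul_sum, Finset.sum_sub_distrib, ← Finset.mul_sum]
    rw [this, hτs_sum, hτi_sum]
    field_simp
  have hdecomp : (1 - θ) • tb + θ • τi = τs := by
    rw [htb, smul_inv_smul₀ (by positivity : (1 - θ) ≠ 0)]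
    abel
  refine ⟨hsum, hnn, hsum, ?_⟩
  intro x hx
  set M := Amap p n A₀ A x with hM
  have hQs : τs ⬝ᵥ (M *ᵥ τs) = 0 := hτs_im x hx
  have hQi : τi ⬝ᵥ (M *ᵥ τi) = 0 := hτi_im x hx
  set u := tb ⬝ᵥ (M *ᵥ tb) with hu
  set c1 := tb ⬝ᵥ (M *ᵥ τi) with hc1
  set c2 := τi ⬝ᵥ (M *ᵥ tb) with hc2
  have hu_nn : 0 ≤ u := hx tb hnn
  have hs : (1-θ)^2 * u + (1-θ)*θ * c1 + (1-θ)*θ * c2 + θ^2 * (τi ⬝ᵥ (M *ᵥ τi)) = 0 := by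
    rw [← quad_expand M tb τi (1-θ) θ, hdecomp, hQs]
  rw [hQi] at hs
  set lam := 2*θ/(1-θ) with hlam
  have hlam_pos : 0 < lam := by positivity
  have hfeas : 0 ≤ 1^2 * u + 1*lam * c1 + 1*lam * c2 + lam^2 * (τi ⬝ᵥ (M *ᵥ τi)) := by
    rw [← quad_expand M tb τi 1 lam]
    apply hx
    intro k
    simp only [Pi.add_apply, Pi.smul_apply, smul_eq_mul, one_mul]
    have := hnn k
    have := hτi_nn k
    nlinarith
  rw [hQi] at hfeas
  have hkey : 0 ≤ -u := by
    have hc : c1 + c2 = -((1-θ)/θ) * u := by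
      have hne : (1-θ)*θ ≠ 0 := by positivity
      field_simp
      nlinarith [hs]
    have : 1^2 * u + 1*lam * c1 + 1*lam * c2 + lam^2 * 0 = -u := by
      have : lam * (c1 + c2) = -2 * u := by
        rw [hc, hlam]
        field_simp
      nlinarith [this]
    linarith [hfeas, this]
  linarith
end

section
/- (Equivalence of the dual problems (ED) and (ED-R) for linear SDP) Fix an integer m₀ ≥ 0 and SDP data A_0, …, A_n ∈ S(p), c ∈ ℝⁿ. (i) If (Ũ_m, W̃_m, m = 1,…,m₀; Ũ) is feasible for (ED-R) — i.e., Ũ ∈ P(p), W̃_0 = 0, [[Ũ_m, W̃_m],[W̃_mᵀ, I]] ∈ P(2p) for m = 1,…,m₀, (Ũ_m + W̃_{m−1})•A_j = 0 for j = 0,…,n and m = 1,…,m₀, and (Ũ + W̃_{m₀})•A_j = c_j for j = 1,…,n — then setting D_m = I yields a feasible solution of (ED) with the same objective value −(Ũ + W̃_{m₀})•A_0. (ii) Conversely, for every feasible solution (U_m, W_m, D_m, m = 1,…,m₀; U) of (ED) — i.e., U ∈ P(p), W_0 = 0, [[U_m, W_m],[W_mᵀ, D_m]] ∈ P(2p)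 for m = 1,…,m₀, (U_m + W_{m−1})•A_j = 0 for j = 0,…,n and m = 1,…,m₀, and (U + W_{m₀})•A_j = c_j for j = 1,…,n — there exists a feasible solution (Ũ_m, W̃_m, m = 1,…,m₀; Ũ) of (ED-R) such that (Ũ + W̃_{m₀})•A_0 = (U + W_{m₀})•A_0. (In both problems W_{m₀} is interpreted as 0 when m₀ = 0.) -/
open Matrix
open scoped MatrixOrder

lemma quad_le_trace {p : ℕ} {D : Matrix (Fin p) (Fin p) ℝ} (hD : D.PosSemidef)
    (y : Fin p → ℝ) : y ⬝ᵥ D *ᵥ y ≤ D.trace * (y ⬝ᵥ y) := by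
  obtain ⟨B, hB⟩ := CStarAlgebra.nonneg_iff_eq_star_mul_self.mp hD.nonneg
  rw [star_eq_conjTranspose] at hB; subst hB
  have key : y ⬝ᵥ (Bᴴ * B) *ᵥ y = (B *ᵥ y) ⬝ᵥ (B *ᵥ y) := by
    rw [← Matrix.mulVec_mulVec, Matrix.dotProduct_mulVec, Matrix.vecMul_conjTranspose]
    simp
  rw [key]
  have tr : (Bᴴ * B).trace = ∑ i, ∑ j, B j i ^ 2 := by
    simp [Matrix.trace, Matrix.diag, Matrix.mul_apply, Matrix.conjTranspose_apply, pow_two]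
  rw [tr]
  calc (B *ᵥ y) ⬝ᵥ (B *ᵥ y) = ∑ i, (∑ j, B i j * y j) ^ 2 := by
        simp [dotProduct, Matrix.mulVec, pow_two]
    _ ≤ ∑ i, (∑ j, B i j ^ 2) * (∑ j, y j ^ 2) :=
        Finset.sum_le_sum fun i _ => Finset.sum_mul_sq_le_sq_mul_sq _ _ _
    _ = (∑ i, ∑ j, B j i ^ 2) * (y ⬝ᵥ y) := by
        rw [← Finset.sum_mul, Finset.sum_comm]
        simp [dotProduct, pow_two]

lemma trace_nonneg' {p : ℕ} {D : Matrix (Fin p) (Fin p) ℝ} (hD : D.PosSemidef) :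
    0 ≤ D.trace := by
  obtain ⟨B, hB⟩ := CStarAlgebra.nonneg_iff_eq_star_mul_self.mp hD.nonneg
  rw [star_eq_conjTranspose] at hB; subst hB
  have tr : (Bᴴ * B).trace = ∑ i, ∑ j, B j i ^ 2 := by
    simp [Matrix.trace, Matrix.diag, Matrix.mul_apply, Matrix.conjTranspose_apply, pow_two]
  rw [tr]
  positivity

lemma conjT_real {p q : ℕ} (M : Matrix (Fin p ⊕ Fin p) (Fin q ⊕ Fin q) ℝ) : Mᴴ = Mᵀ := rfl

lemma key_block {p : ℕ} {U W D : Matrix (Fin p) (Fin p) ℝ}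
    (h : (Matrix.fromBlocks U W Wᵀ D).PosSemidef) (β : ℝ) :
    (Matrix.fromBlocks ((β ^ 2 * (D.trace + 1)) • U) (β • W) (β • W)ᵀ
      (1 : Matrix (Fin p) (Fin p) ℝ)).PosSemidef := by
  have hD : D.PosSemidef := by
    have := h.submatrix (Sum.inr : Fin p → Fin p ⊕ Fin p)
    have e : (Matrix.fromBlocks U W Wᵀ D).submatrix (Sum.inr : Fin p → Fin p ⊕ Fin p) Sum.inr = D := by
      ext i j; simp
    rwa [e] at this
  have hUs : U.PosSemidef := by
    have := h.submatrix (Sum.inl : Fin p → Fin p ⊕ Fin p)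
    have e : (Matrix.fromBlocks U W Wᵀ D).submatrix (Sum.inl : Fin p → Fin p ⊕ Fin p) Sum.inl = U := by
      ext i j; simp
    rwa [e] at this
  set T := D.trace with hT
  have hT0 : 0 ≤ T := trace_nonneg' hD
  have ht : (0:ℝ) < T + 1 := by linarith
  refine Matrix.PosSemidef.of_dotProduct_mulVec_nonneg ?_ ?_
  · show _ᴴ = _
    rw [conjT_real, Matrix.fromBlocks_transpose, Matrix.transpose_transpose,
      Matrix.transpose_one, Matrix.transpose_smul,
      show Uᵀ = U from hUs.1]
  · have expand : ∀ (M1 M2 M3 M4 : Matrix (Fin p) (Fin p) ℝ) (u v : Fin p → ℝ),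
        (Sum.elim u v) ⬝ᵥ (Matrix.fromBlocks M1 M2 M3 M4) *ᵥ (Sum.elim u v)
        = u ⬝ᵥ M1 *ᵥ u + u ⬝ᵥ M2 *ᵥ v + (v ⬝ᵥ M3 *ᵥ u + v ⬝ᵥ M4 *ᵥ v) := by
      intro M1 M2 M3 M4 u v
      rw [Matrix.fromBlocks_mulVec, sumElim_dotProduct_sumElim]
      simp only [Sum.elim_comp_inl, Sum.elim_comp_inr, dotProduct_add]
    intro z
    set x : Fin p → ℝ := z ∘ Sum.inl with hx
    set y : Fin p → ℝ := z ∘ Sum.inr with hy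
    have hz : z = Sum.elim x y := by funext i; cases i <;> rfl
    have hstar : star z = z := by funext i; simp
    rw [hstar, hz, expand]
    have hb : y ⬝ᵥ Wᵀ *ᵥ x = x ⬝ᵥ W *ᵥ y := by
      rw [Matrix.dotProduct_mulVec, Matrix.vecMul_transpose, dotProduct_comm]
    set a := x ⬝ᵥ U *ᵥ x with ha
    set b := x ⬝ᵥ W *ᵥ y with hbdef
    set d := y ⬝ᵥ D *ᵥ y with hd
    set e := y ⬝ᵥ y with he
    have hde : d ≤ T * e := quad_le_trace hD y
    have hmain := h.dotProduct_mulVec_nonneg (star (Sum.elim ((β * (T + 1)) • x) y))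
    rw [star_star] at hmain
    have hstar2 : star (Sum.elim ((β * (T + 1)) • x) y) = Sum.elim ((β * (T + 1)) • x) y := by
      funext i; simp
    rw [hstar2, expand] at hmain
    have e1 : ((β * (T + 1)) • x) ⬝ᵥ U *ᵥ ((β * (T + 1)) • x) = (β * (T + 1)) ^ 2 * a := by
      rw [Matrix.mulVec_smul, smul_dotProduct, dotProduct_smul, ← ha]
      simp [smul_eq_mul]; ring
    have e2 : ((β * (T + 1)) • x) ⬝ᵥ W *ᵥ y = (β * (T + 1)) * b := by
      rw [smul_dotProduct]; simp [smul_eq_mul, hbdef]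
    have e3 : y ⬝ᵥ Wᵀ *ᵥ ((β * (T + 1)) • x) = (β * (T + 1)) * b := by
      rw [Matrix.mulVec_smul, dotProduct_smul, hb]; simp [smul_eq_mul]
    rw [e1, e2, e3] at hmain
    have g1 : x ⬝ᵥ ((β ^ 2 * (T + 1)) • U) *ᵥ x = β ^ 2 * (T + 1) * a := by
      rw [Matrix.smul_mulVec, dotProduct_smul]; simp [smul_eq_mul, ha]
    have g2 : x ⬝ᵥ (β • W) *ᵥ y = β * b := by
      rw [Matrix.smul_mulVec, dotProduct_smul]; simp [smul_eq_mul, hbdef]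
    have g3 : y ⬝ᵥ (β • W)ᵀ *ᵥ x = β * b := by
      rw [Matrix.transpose_smul, Matrix.smul_mulVec, dotProduct_smul, hb]
      simp [smul_eq_mul]
    have g4 : y ⬝ᵥ (1 : Matrix (Fin p) (Fin p) ℝ) *ᵥ y = e := by
      rw [Matrix.one_mulVec, ← he]
    rw [g1, g2, g3, g4]
    have he0 : 0 ≤ e := by
      rw [he]; exact Finset.sum_nonneg fun i _ => mul_self_nonneg _
    have hquad : 0 ≤ (T + 1) * (β ^ 2 * (T + 1) * a + β * b + (β * b + e)) := by
      nlinarith [hmain, hde, hT0, he0]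
    nlinarith [hquad, ht]

/-- Downward recursion of scaling factors. -/
noncomputable def gam {p : ℕ} (m₀ : ℕ) (Dm : ℕ → Matrix (Fin p) (Fin p) ℝ) : ℕ → ℝ
  | 0 => 1
  | k + 1 => (gam m₀ Dm k) ^ 2 * ((Dm (m₀ - k)).trace + 1)


/-- Feasibility for the extended dual problem (ED) of a linear SDP, with blocks
`D_m` as variables.  `Wm 0 = 0` encodes the convention `W₀ = 0` (so that
`Wm m₀ = 0` when `m₀ = 0`). -/
def feasED (p n m₀ : ℕ) (A₀ : Matrix (Fin p) (Fin p) ℝ)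
    (A : Fin n → Matrix (Fin p) (Fin p) ℝ) (c : Fin n → ℝ)
    (U : Matrix (Fin p) (Fin p) ℝ) (Um Wm Dm : ℕ → Matrix (Fin p) (Fin p) ℝ) :
    Prop :=
  U.PosSemidef ∧ Wm 0 = 0 ∧
  (∀ m, 1 ≤ m → m ≤ m₀ →
    (Matrix.fromBlocks (Um m) (Wm m) (Wm m)ᵀ (Dm m)).PosSemidef) ∧
  (∀ m, 1 ≤ m → m ≤ m₀ →
    ((Um m + Wm (m - 1)) * A₀).trace = 0 ∧
    ∀ j : Fin n, ((Um m + Wm (m - 1)) * A j).trace = 0) ∧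
  (∀ j : Fin n, ((U + Wm m₀) * A j).trace = c j)

/-- Feasibility for the Ramana–Tunçel–Wolkowicz regularized dual (ED-R): the
lower-right blocks are the identity matrix. -/
def feasEDR (p n m₀ : ℕ) (A₀ : Matrix (Fin p) (Fin p) ℝ)
    (A : Fin n → Matrix (Fin p) (Fin p) ℝ) (c : Fin n → ℝ)
    (U : Matrix (Fin p) (Fin p) ℝ) (Um Wm : ℕ → Matrix (Fin p) (Fin p) ℝ) :
    Prop :=
  feasED p n m₀ A₀ A c U Um Wm (fun _ => (1 : Matrix (Fin p) (Fin p) ℝ))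

/-- equivalence of the dual problems (ED) and (ED-R) for linear SDP:
(i) every feasible solution of (ED-R) yields, by taking `D_m = I`, a feasible
solution of (ED) with the same objective value `−(Ũ + W̃_{m₀}) • A₀`;
(ii) conversely, for every feasible solution of (ED) there is a feasible solution
of (ED-R) with the same objective value. -/
theorem ED_EDR_equivalent (p n : ℕ) (hp : 1 ≤ p) (hn : 1 ≤ n) (m₀ : ℕ)
    (A₀ : Matrix (Fin p) (Fin p) ℝ) (A : Fin n → Matrix (Fin p) (Fin p) ℝ)
    (hA₀ : A₀.IsSymm) (hA : ∀ i, (A i).IsSymm) (c : Fin n → ℝ) :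
    (∀ (Ut : Matrix (Fin p) (Fin p) ℝ) (Umt Wmt : ℕ → Matrix (Fin p) (Fin p) ℝ),
      feasEDR p n m₀ A₀ A c Ut Umt Wmt →
        feasED p n m₀ A₀ A c Ut Umt Wmt (fun _ => (1 : Matrix (Fin p) (Fin p) ℝ)) ∧
        -((Ut + Wmt m₀) * A₀).trace = -((Ut + Wmt m₀) * A₀).trace) ∧
    (∀ (U : Matrix (Fin p) (Fin p) ℝ) (Um Wm Dm : ℕ → Matrix (Fin p) (Fin p) ℝ),
      feasED p n m₀ A₀ A c U Um Wm Dm →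
        ∃ (Ut : Matrix (Fin p) (Fin p) ℝ) (Umt Wmt : ℕ → Matrix (Fin p) (Fin p) ℝ),
          feasEDR p n m₀ A₀ A c Ut Umt Wmt ∧
          ((Ut + Wmt m₀) * A₀).trace = ((U + Wm m₀) * A₀).trace) := by
  constructor
  · exact fun Ut Umt Wmt h => ⟨h, rfl⟩
  · intro U Um Wm Dm hED
    obtain ⟨hU, hW0, hblk, hcon, hfin⟩ := hED
    refine ⟨U, fun m => gam m₀ Dm (m₀ - m + 1) • Um m,
      fun m => gam m₀ Dm (m₀ - m) • Wm m, ⟨hU, ?_, ?_, ?_, ?_⟩, ?_⟩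
    · show gam m₀ Dm (m₀ - 0) • Wm 0 = 0
      rw [hW0, smul_zero]
    · intro m h1 hm
      dsimp only
      have e1 : m₀ - (m₀ - m) = m := by omega
      have e2 : gam m₀ Dm (m₀ - m + 1)
          = (gam m₀ Dm (m₀ - m)) ^ 2 * ((Dm m).trace + 1) := by
        rw [gam, e1]
      rw [e2]
      exact key_block (hblk m h1 hm) _
    · intro m h1 hm
      dsimp only
      have e1 : m₀ - (m - 1) = m₀ - m + 1 := by omega
      rw [e1, ← smul_add]
      constructor
      · rw [Matrix.smul_mul, Matrix.trace_smul, (hcon m h1 hm).1, smul_zero]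
      · intro j
        rw [Matrix.smul_mul, Matrix.trace_smul, (hcon m h1 hm).2 j, smul_zero]
    · intro j
      dsimp only
      rw [Nat.sub_self]
      show ((U + gam m₀ Dm 0 • Wm m₀) * A j).trace = c j
      rw [show gam m₀ Dm 0 = 1 from rfl, one_smul]
      exact hfin j
    · dsimp only
      rw [Nat.sub_self]
      show ((U + gam m₀ Dm 0 • Wm m₀) * A₀).trace = _
      rw [show gam m₀ Dm 0 = 1 from rfl, one_smul]
end
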